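/- Let 𝒜, ℬ be self-adjoint extensions of A, 𝒩(u,v) = (−ℬv, 𝒜u) on dom(𝒜)×dom(ℬ), and V(u,v) = (−Gv, Fu) with F, G bounded self-adjoint operators on H. If λ ∈ ℝ is an algebraically simple eigenvalue in the discrete spectrum of 𝒩 + V with eigenvector u, then ker((𝒩+V)* − λ) = span{τu} and ⟨τu, u⟩_{H²} ≠ 0. -/

import Mathlib

noncomputable section

open Function Set

namespace CSO

local notation "⟪" x ", " y "⟫" => (inner ℂ x y : ℂ)

/-- The ℓ²-direct sum `E ⊕ E`. -/
abbrev Sq (E : Type*) : Type _ := WithLp 2 (E × E)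

section Pieces

variable {E F E' F' : Type*}
  [NormedAddCommGroup E] [InnerProductSpace ℂ E]
  [NormedAddCommGroup F] [InnerProductSpace ℂ F]
  [NormedAddCommGroup E'] [InnerProductSpace ℂ E']
  [NormedAddCommGroup F'] [InnerProductSpace ℂ F']

/-- Pairing map into the ℓ²-direct sum. -/
def mk2 (x y : E) : Sq E := (WithLp.equiv 2 (E × E)).symm (x, y)

/-- First component. -/
def c1 (u : Sq E) : E := (WithLp.equiv 2 (E × E) u).1

/-- Second component. -/
def c2 (u : Sq E) : E := (WithLp.equiv 2 (E × E) u).2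

/-- Transport of a product of continuous linear maps to the ℓ²-products. -/
def pm (A : E →L[ℂ] E') (B : F →L[ℂ] F') :
    WithLp 2 (E × F) →L[ℂ] WithLp 2 (E' × F') :=
  (((WithLp.prodContinuousLinearEquiv 2 ℂ E' F').symm :
      (E' × F') →L[ℂ] WithLp 2 (E' × F')).comp (A.prodMap B)).comp
    ((WithLp.prodContinuousLinearEquiv 2 ℂ E F :
      WithLp 2 (E × F) ≃L[ℂ] (E × F)) : WithLp 2 (E × F) →L[ℂ] E × F)

/-- The continuous linear map `x ↦ (A x, B x)` into an ℓ²-direct sum. -/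
def mk2L (A B : E →L[ℂ] F) : E →L[ℂ] Sq F :=
  (((WithLp.prodContinuousLinearEquiv 2 ℂ F F).symm :
      (F × F) →L[ℂ] Sq F)).comp (A.prod B)

/-- First component as a continuous linear map. -/
def c1L : Sq E →L[ℂ] E :=
  (ContinuousLinearMap.fst ℂ E E).comp
    ((WithLp.prodContinuousLinearEquiv 2 ℂ E E :
      Sq E ≃L[ℂ] (E × E)) : Sq E →L[ℂ] E × E)

/-- Second component as a continuous linear map. -/
def c2L : Sq E →L[ℂ] E :=
  (ContinuousLinearMap.snd ℂ E E).comp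
    ((WithLp.prodContinuousLinearEquiv 2 ℂ E E :
      Sq E ≃L[ℂ] (E × E)) : Sq E →L[ℂ] E × E)

/-- The involution `τ (u₁, u₂) = (u₂, u₁)`. -/
def swapL (E : Type*) [NormedAddCommGroup E] [InnerProductSpace ℂ E] :
    Sq E →L[ℂ] Sq E := mk2L c2L c1L

/-- The standard symplectic matrix `J (f₁, f₂) = (f₂, -f₁)`. -/
def Jm (E : Type*) [NormedAddCommGroup E] [InnerProductSpace ℂ E] :
    Sq E →L[ℂ] Sq E := mk2L c2L (-c1L)

/-- The symplectic matrix `𝒥 = J ⊕ (-J)` on `𝔥⁴`. -/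
def calJ (E : Type*) [NormedAddCommGroup E] [InnerProductSpace ℂ E] :
    Sq (Sq E) →L[ℂ] Sq (Sq E) := pm (Jm E) (-(Jm E))

/-- The symplectic form `ω(f, g) = ⟨f₂, g₁⟩ - ⟨f₁, g₂⟩` on `𝔥²`. -/
def om (f g : Sq E) : ℂ := ⟪c2 f, c1 g⟫ - ⟪c1 f, c2 g⟫

/-- The symplectic form
`Ω(f, g) = ⟨f₂,g₁⟩ - ⟨f₁,g₂⟩ - ⟨f₄,g₃⟩ + ⟨f₃,g₄⟩` on `𝔥⁴`. -/
def Om (f g : Sq (Sq E)) : ℂ := om (c1 f) (c1 g) - om (c2 f) (c2 g)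

/-- Orthogonal projection predicate. -/
def IsOrthProj [CompleteSpace E] (P : E →L[ℂ] E) : Prop :=
  P.comp P = P ∧ IsSelfAdjoint P

/-- The range of `P` is a Lagrangian subspace of `(𝔥², ω)`. -/
def IsLagrangianRange (P : Sq E →L[ℂ] Sq E) : Prop :=
  ∀ f, f ∈ Set.range P ↔ ∀ g ∈ Set.range P, om f g = 0

end Pieces

/-- The core data: a closed densely defined symmetric operator `A` with equal finite
deficiency indices `dim 𝔥`, whose adjoint `A*` has domain the Hilbert space `Hp = H₊`
(with the graph inner product), realized through the embedding `e : H₊ → H` and the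
bounded operator `As = A* : H₊ → H`. -/
structure Core (H 𝔥 Hp : Type*) [NormedAddCommGroup H] [InnerProductSpace ℂ H]
    [NormedAddCommGroup 𝔥] [InnerProductSpace ℂ 𝔥]
    [NormedAddCommGroup Hp] [InnerProductSpace ℂ Hp] where
  e : Hp →L[ℂ] H
  As : Hp →L[ℂ] H
  e_inj : Function.Injective e
  graph_inner : ∀ u v : Hp, ⟪u, v⟫ = ⟪e u, e v⟫ + ⟪As u, As v⟫
  domA : Submodule ℂ Hp
  dense_dom : Dense (e '' (domA : Set Hp))
  adjoint_iff : ∀ v w : H,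
      (∃ p : Hp, e p = v ∧ As p = w) ↔ ∀ u ∈ domA, ⟪As u, v⟫ = ⟪e u, w⟫
  closed_graph : IsClosed {q : H × H | ∃ p ∈ domA, e p = q.1 ∧ As p = q.2}
  defect_m : Module.finrank ℂ
      (LinearMap.ker (As.toLinearMap - Complex.I • e.toLinearMap)) = Module.finrank ℂ 𝔥
  defect_p : Module.finrank ℂ
      (LinearMap.ker (As.toLinearMap + Complex.I • e.toLinearMap)) = Module.finrank ℂ 𝔥

variable {H 𝔥 Hp : Type*}
  [NormedAddCommGroup H] [InnerProductSpace ℂ H]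
  [NormedAddCommGroup 𝔥] [InnerProductSpace ℂ 𝔥]
  [NormedAddCommGroup Hp] [InnerProductSpace ℂ Hp]

/-- The embedding `H₊² → H²`. -/
def Core.emb2 (C : Core H 𝔥 Hp) : Sq Hp →L[ℂ] Sq H := pm C.e C.e

/-- The action `(u₁,u₂) ↦ (-A* u₂, A* u₁)` (the common formula for `N` and its
extensions `𝒩`). -/
def Core.Nmax (C : Core H 𝔥 Hp) : Sq Hp →L[ℂ] Sq H :=
  mk2L ((-C.As).comp c2L) (C.As.comp c1L)

/-- The action of `N* : (u₁,u₂) ↦ (A* u₂, -A* u₁)`. -/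
def Core.NstarOp (C : Core H 𝔥 Hp) : Sq Hp →L[ℂ] Sq H := -C.Nmax

/-- The action of `(τN)* : (u₁,u₂) ↦ (A* u₁, -A* u₂)`. -/
def Core.tauNstarOp (C : Core H 𝔥 Hp) : Sq Hp →L[ℂ] Sq H :=
  mk2L (C.As.comp c1L) ((-C.As).comp c2L)

/-- Trace operator (boundary triplet map) for `A*`: bounded, surjective, and
satisfying the abstract Green identity. -/
structure IsTrace (C : Core H 𝔥 Hp) (tr : Hp →L[ℂ] Sq 𝔥) : Prop where
  surj : Function.Surjective tr
  green : ∀ u v : Hp, ⟪C.As u, C.e v⟫ - ⟪C.e u, C.As v⟫ = om (tr u) (tr v)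

/-- The doubled trace operator `T = tr ⊕ tr : H₊² → 𝔥⁴`. -/
def Top (tr : Hp →L[ℂ] Sq 𝔥) : Sq Hp →L[ℂ] Sq (Sq 𝔥) := pm tr tr

/-- `dom ⊆ H₊` is the domain of a self-adjoint extension of `A` (the extension being
the restriction of `A*` to `dom`). -/
structure IsSAExt (C : Core H 𝔥 Hp) (dom : Submodule ℂ Hp) : Prop where
  le : C.domA ≤ dom
  sa : ∀ v w : H,
      (∃ p ∈ dom, C.e p = v ∧ C.As p = w) ↔ ∀ u ∈ dom, ⟪C.As u, v⟫ = ⟪C.e u, w⟫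

/-- The bounded potential `V(u,v) = (-G v, F u)` on `H²`. -/
def Vop [CompleteSpace H] (F G : H →L[ℂ] H) : Sq H →L[ℂ] Sq H :=
  mk2L ((-G).comp c2L) (F.comp c1L)

/-- The adjoint potential `V*(u,v) = (F v, -G u)` on `H²`. -/
def VopStar [CompleteSpace H] (F G : H →L[ℂ] H) : Sq H →L[ℂ] Sq H :=
  mk2L (F.comp c2L) ((-G).comp c1L)

/-- `p ∈ dom(𝒜) × dom(ℬ)` and `(𝒩 + V - ζ) p = x`. -/
def ResSol (C : Core H 𝔥 Hp) [CompleteSpace H] (dU dV : Submodule ℂ Hp)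
    (V : Sq H →L[ℂ] Sq H) (ζ : ℂ) (p : Sq Hp) (x : Sq H) : Prop :=
  c1 p ∈ dU ∧ c2 p ∈ dV ∧ C.Nmax p + V (C.emb2 p) - ζ • C.emb2 p = x

/-- `R = (𝒩 + V - ζ)⁻¹`, viewed as a bounded operator from `H²` to `H₊²`. -/
def IsResS (C : Core H 𝔥 Hp) [CompleteSpace H] (dU dV : Submodule ℂ Hp)
    (V : Sq H →L[ℂ] Sq H) (ζ : ℂ) (R : Sq H →L[ℂ] Sq Hp) : Prop :=
  (∀ x, ResSol C dU dV V ζ (R x) x) ∧ ∀ p x, ResSol C dU dV V ζ p x → R x = p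

/-- `R = (𝒩 + V - ζ)⁻¹ ∈ B(H²)`. -/
def IsResW (C : Core H 𝔥 Hp) [CompleteSpace H] (dU dV : Submodule ℂ Hp)
    (V : Sq H →L[ℂ] Sq H) (ζ : ℂ) (R : Sq H →L[ℂ] Sq H) : Prop :=
  (∀ x, ∃ p, ResSol C dU dV V ζ p x ∧ C.emb2 p = R x) ∧
    ∀ p x, ResSol C dU dV V ζ p x → R x = C.emb2 p

/-- The spectrum of `𝒩 + V` (complement of the resolvent set). -/
def specSet (C : Core H 𝔥 Hp) [CompleteSpace H] (dU dV : Submodule ℂ Hp)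
    (V : Sq H →L[ℂ] Sq H) : Set ℂ :=
  {ζ | ¬ ∃ R : Sq H →L[ℂ] Sq Hp, IsResS C dU dV V ζ R}

/-- The resolvent `(𝒩 + V - ζ)⁻¹ : H² → H₊²` (defined by choice; `0` off the
resolvent set). -/
def resolventS (C : Core H 𝔥 Hp) [CompleteSpace H] (dU dV : Submodule ℂ Hp)
    (V : Sq H →L[ℂ] Sq H) (ζ : ℂ) : Sq H →L[ℂ] Sq Hp :=
  open Classical in
  if h : ∃ R, IsResS C dU dV V ζ R then h.choose else 0

/-- The resolvent `(𝒩 + V - ζ)⁻¹ ∈ B(H²)`. -/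
def resolventW (C : Core H 𝔥 Hp) [CompleteSpace H] (dU dV : Submodule ℂ Hp)
    (V : Sq H →L[ℂ] Sq H) (ζ : ℂ) : Sq H →L[ℂ] Sq H :=
  C.emb2.comp (resolventS C dU dV V ζ)

/-- `ζ` is an eigenvalue of `𝒩 + V`. -/
def IsEig (C : Core H 𝔥 Hp) [CompleteSpace H] (dU dV : Submodule ℂ Hp)
    (V : Sq H →L[ℂ] Sq H) (ζ : ℂ) : Prop :=
  ∃ p : Sq Hp, p ≠ 0 ∧ c1 p ∈ dU ∧ c2 p ∈ dV ∧
    C.Nmax p + V (C.emb2 p) = ζ • C.emb2 p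

/-- The one-parameter families of Hypothesis 3.1: trace operators, orthogonal
projections with Lagrangian ranges, self-adjoint extensions compatible with the
projections, and bounded self-adjoint perturbations. -/
structure IsFamily [CompleteSpace H] [CompleteSpace Hp] [FiniteDimensional ℂ 𝔥]
    (C : Core H 𝔥 Hp)
    (tr : ℝ → Hp →L[ℂ] Sq 𝔥) (P Q : ℝ → Sq 𝔥 →L[ℂ] Sq 𝔥)
    (dU dV : ℝ → Submodule ℂ Hp) (F G : ℝ → H →L[ℂ] H) : Prop where
  htr : ∀ t ∈ Icc (0:ℝ) 1, IsTrace C (tr t)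
  hP : ∀ t ∈ Icc (0:ℝ) 1, IsOrthProj (P t) ∧ IsLagrangianRange (P t)
  hQ : ∀ t ∈ Icc (0:ℝ) 1, IsOrthProj (Q t) ∧ IsLagrangianRange (Q t)
  hU : ∀ t ∈ Icc (0:ℝ) 1, IsSAExt C (dU t)
  hV : ∀ t ∈ Icc (0:ℝ) 1, IsSAExt C (dV t)
  htrU : ∀ t ∈ Icc (0:ℝ) 1, tr t '' ((dU t : Set Hp)) = Set.range (P t)
  htrV : ∀ t ∈ Icc (0:ℝ) 1, tr t '' ((dV t : Set Hp)) = Set.range (Q t)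
  hF : ∀ t ∈ Icc (0:ℝ) 1, IsSelfAdjoint (F t)
  hG : ∀ t ∈ Icc (0:ℝ) 1, IsSelfAdjoint (G t)

/-- Hypothesis 3.3: there is a point `z` in the resolvent set of `𝒩_t + V_t`
for all `t` near `t₀`. -/
def HypZ [CompleteSpace H] (C : Core H 𝔥 Hp) (dU dV : ℝ → Submodule ℂ Hp)
    (F G : ℝ → H →L[ℂ] H) (t₀ : ℝ) (z : ℂ) : Prop :=
  ∃ δ > 0, ∀ t : ℝ, |t - t₀| < δ →
    ∃ R, IsResS C (dU t) (dV t) (Vop (F t) (G t)) z R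

end CSO

namespace CSO


set_option linter.unusedSectionVars false

local notation "⟪" x ", " y "⟫" => (inner ℂ x y : ℂ)

section Helpers

variable {E F : Type*}
  [NormedAddCommGroup E] [InnerProductSpace ℂ E]
  [NormedAddCommGroup F] [InnerProductSpace ℂ F]

@[simp] lemma c1_mk2 (x y : E) : c1 (mk2 x y) = x := rfl
@[simp] lemma c2_mk2 (x y : E) : c2 (mk2 x y) = y := rfl

lemma sq_ext {p q : Sq E} (h1 : c1 p = c1 q) (h2 : c2 p = c2 q) : p = q :=
  (WithLp.equiv 2 (E × E)).injective (Prod.ext h1 h2)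

@[simp] lemma c1_add (p q : Sq E) : c1 (p + q) = c1 p + c1 q := rfl
@[simp] lemma c2_add (p q : Sq E) : c2 (p + q) = c2 p + c2 q := rfl
@[simp] lemma c1_sub (p q : Sq E) : c1 (p - q) = c1 p - c1 q := rfl
@[simp] lemma c2_sub (p q : Sq E) : c2 (p - q) = c2 p - c2 q := rfl
@[simp] lemma c1_smul (c : ℂ) (p : Sq E) : c1 (c • p) = c • c1 p := rfl
@[simp] lemma c2_smul (c : ℂ) (p : Sq E) : c2 (c • p) = c • c2 p := rfl
@[simp] lemma c1_zero : c1 (0 : Sq E) = 0 := rfl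
@[simp] lemma c2_zero : c2 (0 : Sq E) = 0 := rfl
@[simp] lemma c1_neg (p : Sq E) : c1 (-p) = -(c1 p) := rfl
@[simp] lemma c2_neg (p : Sq E) : c2 (-p) = -(c2 p) := rfl

@[simp] lemma mk2_smul (c : ℂ) (x y : E) : c • mk2 x y = mk2 (c • x) (c • y) := rfl

@[simp] lemma mk2L_apply (A B : E →L[ℂ] F) (x : E) : mk2L A B x = mk2 (A x) (B x) := rfl
@[simp] lemma c1L_apply (p : Sq E) : (c1L : Sq E →L[ℂ] E) p = c1 p := rfl
@[simp] lemma c2L_apply (p : Sq E) : (c2L : Sq E →L[ℂ] E) p = c2 p := rfl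

lemma swapL_apply (p : Sq E) : swapL E p = mk2 (c2 p) (c1 p) := rfl

lemma inner_sq (p q : Sq E) : ⟪p, q⟫ = ⟪c1 p, c1 q⟫ + ⟪c2 p, c2 q⟫ :=
  WithLp.prod_inner_apply p q

variable {H 𝔥 Hp : Type*}
  [NormedAddCommGroup H] [InnerProductSpace ℂ H]
  [NormedAddCommGroup 𝔥] [InnerProductSpace ℂ 𝔥]
  [NormedAddCommGroup Hp] [InnerProductSpace ℂ Hp]

lemma Nmax_apply (C : Core H 𝔥 Hp) (p : Sq Hp) :
    C.Nmax p = mk2 (-(C.As (c2 p))) (C.As (c1 p)) := rfl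

lemma emb2_apply (C : Core H 𝔥 Hp) (p : Sq Hp) :
    C.emb2 p = mk2 (C.e (c1 p)) (C.e (c2 p)) := rfl

lemma Vop_apply [CompleteSpace H] (F G : H →L[ℂ] H) (x : Sq H) :
    Vop F G x = mk2 (-(G (c2 x))) (F (c1 x)) := rfl

end Helpers

/-- if `λ ∈ ℝ` is an algebraically simple eigenvalue in the
discrete spectrum of `𝒩 + V` with eigenvector `u`, then
`ker((𝒩+V)* - λ) = span {τu}` and `⟨τu, u⟩ ≠ 0`. -/
theorem statement10
    {H 𝔥 Hp : Type*}
    [NormedAddCommGroup H] [InnerProductSpace ℂ H] [CompleteSpace H]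
    [NormedAddCommGroup 𝔥] [InnerProductSpace ℂ 𝔥] [FiniteDimensional ℂ 𝔥]
    [NormedAddCommGroup Hp] [InnerProductSpace ℂ Hp] [CompleteSpace Hp]
    (C : Core H 𝔥 Hp)
    (dU dV : Submodule ℂ Hp) (hU : IsSAExt C dU) (hV : IsSAExt C dV)
    (F G : H →L[ℂ] H) (hF : IsSelfAdjoint F) (hG : IsSelfAdjoint G)
    (lam : ℝ) (u : Sq Hp) (hu0 : u ≠ 0)
    (hu1 : c1 u ∈ dU) (hu2 : c2 u ∈ dV)
    (hueq : C.Nmax u + Vop F G (C.emb2 u) = (lam : ℂ) • C.emb2 u)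
    -- geometric simplicity: `dim ker(𝒩 + V - λ) = 1`
    (hker : ∀ p : Sq Hp, c1 p ∈ dU → c2 p ∈ dV →
      C.Nmax p + Vop F G (C.emb2 p) = (lam : ℂ) • C.emb2 p → ∃ c : ℂ, p = c • u)
    -- algebraic simplicity: no generalized eigenvector
    (hgen : ¬ ∃ w : Sq Hp, c1 w ∈ dU ∧ c2 w ∈ dV ∧
      C.Nmax w + Vop F G (C.emb2 w) - (lam : ℂ) • C.emb2 w = C.emb2 u)
    -- `λ` lies in the discrete spectrum: it is isolated and `𝒩 + V - λ` has closed range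
    (hIso : ∃ ρ > 0, ∀ μ ∈ specSet C dU dV (Vop F G),
      ‖μ - (lam : ℂ)‖ < ρ → μ = (lam : ℂ))
    (hClosedRange : IsClosed {x : Sq H | ∃ p : Sq Hp, c1 p ∈ dU ∧ c2 p ∈ dV ∧
      C.Nmax p + Vop F G (C.emb2 p) - (lam : ℂ) • C.emb2 p = x}) :
    ({q : Sq H | ∀ p : Sq Hp, c1 p ∈ dU → c2 p ∈ dV →
        (inner ℂ (C.Nmax p + Vop F G (C.emb2 p) - (lam : ℂ) • C.emb2 p) q : ℂ) = 0} =
      {q : Sq H | ∃ c : ℂ, q = c • swapL H (C.emb2 u)}) ∧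
    (inner ℂ (swapL H (C.emb2 u)) (C.emb2 u) : ℂ) ≠ 0 := by
  classical
  have hFsym : ∀ x y : H, ⟪F x, y⟫ = ⟪x, F y⟫ := fun x y => by
    conv_lhs => rw [← hF.adjoint_eq]
    exact ContinuousLinearMap.adjoint_inner_left F y x
  have hGsym : ∀ x y : H, ⟪G x, y⟫ = ⟪x, G y⟫ := fun x y => by
    conv_lhs => rw [← hG.adjoint_eq]
    exact ContinuousLinearMap.adjoint_inner_left G y x
  have symU : ∀ p ∈ dU, ∀ q ∈ dU, ⟪C.As p, C.e q⟫ = ⟪C.e p, C.As q⟫ := by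
    intro p hp q hq
    exact ((hU.sa (C.e q) (C.As q)).mp ⟨q, hq, rfl, rfl⟩) p hp
  have symV : ∀ p ∈ dV, ∀ q ∈ dV, ⟪C.As p, C.e q⟫ = ⟪C.e p, C.As q⟫ := by
    intro p hp q hq
    exact ((hV.sa (C.e q) (C.As q)).mp ⟨q, hq, rfl, rfl⟩) p hp
  have eq1 : -(C.As (c2 u)) + -(G (C.e (c2 u))) = (lam : ℂ) • C.e (c1 u) := by
    have h := congrArg c1 hueq
    exact h
  have eq2 : C.As (c1 u) + F (C.e (c1 u)) = (lam : ℂ) • C.e (c2 u) := by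
    have h := congrArg c2 hueq
    exact h
  have hlam : (starRingEnd ℂ) (lam : ℂ) = (lam : ℂ) := Complex.conj_ofReal lam
  have key : ∀ p : Sq Hp, c1 p ∈ dU → c2 p ∈ dV →
      ⟪C.Nmax p + Vop F G (C.emb2 p) - (lam : ℂ) • C.emb2 p, swapL H (C.emb2 u)⟫ = 0 := by
    intro p hp1 hp2
    have h1 := symU (c1 p) hp1 (c1 u) hu1
    have h2 := symV (c2 p) hp2 (c2 u) hu2
    have h3 := hGsym (C.e (c2 p)) (C.e (c2 u))
    have h4 := hFsym (C.e (c1 p)) (C.e (c1 u))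
    have h5 : ⟪C.e (c2 p), -(C.As (c2 u)) + -(G (C.e (c2 u)))⟫
        = ⟪C.e (c2 p), (lam : ℂ) • C.e (c1 u)⟫ := by rw [eq1]
    have h6 : ⟪C.e (c1 p), C.As (c1 u) + F (C.e (c1 u))⟫
        = ⟪C.e (c1 p), (lam : ℂ) • C.e (c2 u)⟫ := by rw [eq2]
    simp only [inner_sq, Nmax_apply, Vop_apply, emb2_apply, swapL_apply, c1_add, c2_add,
      c1_sub, c2_sub, c1_smul, c2_smul, c1_mk2, c2_mk2, inner_add_left, inner_sub_left,
      inner_neg_left, inner_smul_left, inner_add_right, inner_sub_right, inner_neg_right,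
      inner_smul_right, hlam] at h5 h6 ⊢
    linear_combination h1 - h2 - h3 + h4 + h5 + h6
  have part1 : ({q : Sq H | ∀ p : Sq Hp, c1 p ∈ dU → c2 p ∈ dV →
        (inner ℂ (C.Nmax p + Vop F G (C.emb2 p) - (lam : ℂ) • C.emb2 p) q : ℂ) = 0} =
      {q : Sq H | ∃ c : ℂ, q = c • swapL H (C.emb2 u)}) := by
    ext q
    simp only [Set.mem_setOf_eq]
    constructor
    · intro hq
      have rel1 : ∀ p1 ∈ dU, ⟪C.As p1, c2 q⟫ = ⟪C.e p1, (lam : ℂ) • c1 q - F (c2 q)⟫ := by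
        intro p1 hp1
        have h := hq (mk2 p1 0) (by simpa using hp1) (by simpa using dV.zero_mem)
        have h4 := hFsym (C.e p1) (c2 q)
        simp only [inner_sq, Nmax_apply, Vop_apply, emb2_apply, c1_add, c2_add,
          c1_sub, c2_sub, c1_smul, c2_smul, c1_mk2, c2_mk2, map_zero, inner_add_left,
          inner_sub_left, inner_neg_left, inner_smul_left, inner_zero_left, inner_sub_right,
          inner_smul_right, hlam] at h ⊢
        linear_combination h - h4
      have rel2 : ∀ p2 ∈ dV, ⟪C.As p2, c1 q⟫ = ⟪C.e p2, -(G (c1 q)) - (lam : ℂ) • c2 q⟫ := by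
        intro p2 hp2
        have h := hq (mk2 0 p2) (by simpa using dU.zero_mem) (by simpa using hp2)
        have h3 := hGsym (C.e p2) (c1 q)
        simp only [inner_sq, Nmax_apply, Vop_apply, emb2_apply, c1_add, c2_add,
          c1_sub, c2_sub, c1_smul, c2_smul, c1_mk2, c2_mk2, map_zero, inner_add_left,
          inner_sub_left, inner_neg_left, inner_smul_left, inner_zero_left, inner_sub_right,
          inner_neg_right, inner_smul_right, hlam] at h ⊢
        linear_combination -h - h3
      obtain ⟨a, ha, hea, hAa⟩ := (hU.sa (c2 q) ((lam : ℂ) • c1 q - F (c2 q))).mpr rel1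
      obtain ⟨b, hb, heb, hAb⟩ := (hV.sa (c1 q) (-(G (c1 q)) - (lam : ℂ) • c2 q)).mpr rel2
      obtain ⟨c, hc⟩ := hker (mk2 a b) (by simpa using ha) (by simpa using hb) (by
        apply sq_ext
        · simp only [Nmax_apply, Vop_apply, emb2_apply, c1_add, c1_smul, c1_mk2, c2_mk2,
            hAb, heb, hea]
          module
        · simp only [Nmax_apply, Vop_apply, emb2_apply, c2_add, c2_smul, c1_mk2, c2_mk2,
            hAa, hea, heb]
          module)
      have hca : a = c • c1 u := by
        have h := congrArg c1 hc; simpa using h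
      have hcb : b = c • c2 u := by
        have h := congrArg c2 hc; simpa using h
      refine ⟨c, sq_ext ?_ ?_⟩
      · simp only [c1_smul, swapL_apply, emb2_apply, c1_mk2, c2_mk2, ← heb, hcb, map_smul]
      · simp only [c2_smul, swapL_apply, emb2_apply, c1_mk2, c2_mk2, ← hea, hca, map_smul]
    · rintro ⟨c, rfl⟩ p hp1 hp2
      rw [inner_smul_right, key p hp1 hp2, mul_zero]
  refine ⟨part1, fun hcontra => ?_⟩
  set L : Sq Hp →L[ℂ] Sq H :=
    C.Nmax + (Vop F G).comp C.emb2 - (lam : ℂ) • C.emb2 with hL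
  have hLapp : ∀ p : Sq Hp,
      L p = C.Nmax p + Vop F G (C.emb2 p) - (lam : ℂ) • C.emb2 p := fun p => by
    simp [hL, ContinuousLinearMap.sub_apply, ContinuousLinearMap.add_apply,
      ContinuousLinearMap.smul_apply, ContinuousLinearMap.comp_apply]
  set D : Submodule ℂ (Sq Hp) :=
    dU.comap (c1L : Sq Hp →L[ℂ] Hp).toLinearMap ⊓ dV.comap (c2L : Sq Hp →L[ℂ] Hp).toLinearMap
    with hD
  set R : Submodule ℂ (Sq H) := D.map L.toLinearMap with hR
  have hRmem : ∀ x : Sq H, x ∈ R ↔ ∃ p : Sq Hp, c1 p ∈ dU ∧ c2 p ∈ dV ∧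
      C.Nmax p + Vop F G (C.emb2 p) - (lam : ℂ) • C.emb2 p = x := by
    intro x
    constructor
    · rintro ⟨p, hpD, rfl⟩
      exact ⟨p, hpD.1, hpD.2, (hLapp p).symm⟩
    · rintro ⟨p, h1, h2, h3⟩
      exact ⟨p, ⟨h1, h2⟩, by rw [← h3]; exact hLapp p⟩
  have hRclosed : IsClosed (R : Set (Sq H)) := by
    have : (R : Set (Sq H)) = {x : Sq H | ∃ p : Sq Hp, c1 p ∈ dU ∧ c2 p ∈ dV ∧
        C.Nmax p + Vop F G (C.emb2 p) - (lam : ℂ) • C.emb2 p = x} := by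
      ext x; simpa using hRmem x
    rw [this]
    exact hClosedRange
  haveI : CompleteSpace R := hRclosed.completeSpace_coe
  have hfR : C.emb2 u ∈ Rᗮᗮ := by
    rw [Submodule.mem_orthogonal]
    intro q hq
    have hq' : q ∈ {q : Sq H | ∀ p : Sq Hp, c1 p ∈ dU → c2 p ∈ dV →
        (inner ℂ (C.Nmax p + Vop F G (C.emb2 p) - (lam : ℂ) • C.emb2 p) q : ℂ) = 0} := by
      intro p h1 h2
      exact (Submodule.mem_orthogonal _ _).mp hq _ ((hRmem _).mpr ⟨p, h1, h2, rfl⟩)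
    rw [part1] at hq'
    obtain ⟨c, rfl⟩ := hq'
    rw [inner_smul_left, hcontra, mul_zero]
  rw [Submodule.orthogonal_orthogonal] at hfR
  obtain ⟨p, h1, h2, h3⟩ := (hRmem _).mp hfR
  exact hgen ⟨p, h1, h2, h3⟩

end CSO
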